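/- arXiv:1501.02237 — 3 statements merged into one kernel-verified Lean document; each statement's English description precedes it below -/
import Mathlib

section
/- Let A ∈ M_{n×m}(ℤ) with rank r, let P ∈ M_{n×n}(ℤ) and Q ∈ M_{m×m}(ℤ) be unimodular matrices such that P·A·Q has (i,i) entry d_i ≠ 0 for 1 ≤ i ≤ r and all other entries 0, and let Q₀ ∈ M_{m×(m−r)}(ℤ) be the matrix formed by the last m−r columns of Q. Then for any b ∈ (ℂˣ)^m, the solution set {x ∈ (ℂˣ)^n : x^A = b} is nonempty if and only if b^{Q₀} = (1, …, 1) ∈ (ℂˣ)^{m−r}. -/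
/-- Matrix exponent: for `x ∈ (ℂˣ)^n` and `A ∈ M_{n×m}(ℤ)`,
`(x^A)_j = ∏_i x_i ^ A_{ij}`. -/
def matExp {n m : ℕ} (x : Fin n → ℂˣ) (A : Matrix (Fin n) (Fin m) ℤ) : Fin m → ℂˣ :=
  fun j => ∏ i, x i ^ A i j

lemma zpow_finset_sum {α : Type*} (x : ℂˣ) (s : Finset α) (f : α → ℤ) :
    x ^ (∑ a ∈ s, f a) = ∏ a ∈ s, x ^ f a := by
  classical
  induction s using Finset.induction with
  | empty => simp
  | insert _ _ h ih => simp [Finset.sum_insert h, Finset.prod_insert h, zpow_add, ih]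

lemma matExp_mul {n m k : ℕ} (x : Fin n → ℂˣ) (A : Matrix (Fin n) (Fin m) ℤ)
    (B : Matrix (Fin m) (Fin k) ℤ) :
    matExp (matExp x A) B = matExp x (A * B) := by
  funext j
  simp only [matExp, Matrix.mul_apply, zpow_finset_sum, ← Finset.prod_zpow, ← zpow_mul]
  exact Finset.prod_comm

lemma matExp_one {n : ℕ} (x : Fin n → ℂˣ) : matExp x (1 : Matrix (Fin n) (Fin n) ℤ) = x := by
  funext j
  simp only [matExp]
  rw [Finset.prod_eq_single j (fun i _ hne => by rw [Matrix.one_apply_ne hne, zpow_zero])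
    (by simp)]
  simp

lemma exists_zpow_eq (c : ℂˣ) (k : ℤ) (hk : k ≠ 0) : ∃ y : ℂˣ, y ^ k = c := by
  have key : ∀ (c : ℂˣ) (n : ℕ), 0 < n → ∃ y : ℂˣ, y ^ (n : ℤ) = c := by
    intro c n hn
    obtain ⟨z, hz⟩ := IsAlgClosed.exists_pow_nat_eq (c : ℂ) hn
    have hz0 : z ≠ 0 := by
      intro h; rw [h, zero_pow hn.ne'] at hz; exact c.ne_zero hz.symm
    refine ⟨Units.mk0 z hz0, Units.ext ?_⟩
    push_cast
    simpa using hz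
  rcases lt_or_gt_of_ne hk with h | h
  · obtain ⟨y, hy⟩ := key c⁻¹ (-k).toNat (by omega)
    have hy' : y ^ (-k) = c⁻¹ := by
      rw [show -k = (((-k).toNat : ℤ)) by omega]; exact hy
    rw [zpow_neg] at hy'
    exact ⟨y, inv_injective hy'⟩
  · obtain ⟨y, hy⟩ := key c k.toNat (by omega)
    exact ⟨y, by rwa [show k = ((k.toNat : ℤ)) by omega]⟩

theorem stmt8 {n m : ℕ} (A : Matrix (Fin n) (Fin m) ℤ) (r : ℕ)
    (hr : r = (A.map (Int.cast : ℤ → ℚ)).rank)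
    (P : Matrix (Fin n) (Fin n) ℤ) (Q : Matrix (Fin m) (Fin m) ℤ)
    (hP : P.det = 1 ∨ P.det = -1) (hQ : Q.det = 1 ∨ Q.det = -1)
    (d : Fin r → ℤ) (hd : ∀ i, d i ≠ 0)
    (hSNF : ∀ (i : Fin n) (j : Fin m),
      (P * A * Q) i j =
        if h : (i : ℕ) = (j : ℕ) ∧ (i : ℕ) < r then d ⟨(i : ℕ), h.2⟩ else 0)
    (b : Fin m → ℂˣ) :
    (∃ x : Fin n → ℂˣ, matExp x A = b) ↔
      matExp b (Matrix.of fun (i : Fin m) (j : Fin (m - r)) =>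
        Q i ⟨r + (j : ℕ), by have := j.isLt; omega⟩) = fun _ => 1 := by
  have hrn : r ≤ n := by
    rw [hr]
    exact (Matrix.rank_le_card_height _).trans (by simp)
  have hrm : r ≤ m := by
    rw [hr]
    exact (Matrix.rank_le_card_width _).trans (by simp)
  have hPu : IsUnit P.det := by rcases hP with h | h <;> simp [h, Int.isUnit_iff]
  have hQu : IsUnit Q.det := by rcases hQ with h | h <;> simp [h, Int.isUnit_iff]
  have iP : Invertible P := P.invertibleOfIsUnitDet hPu
  have iQ : Invertible Q := Q.invertibleOfIsUnitDet hQu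
  set D := P * A * Q with hD
  constructor
  · rintro ⟨x, rfl⟩
    funext j
    have hAQ : A * Q = ⅟P * D := by
      rw [hD, ← Matrix.mul_assoc, ← Matrix.mul_assoc, invOf_mul_self, Matrix.one_mul]
    have key : matExp (matExp x A) Q = matExp (matExp x ⅟P) D := by
      rw [matExp_mul, matExp_mul, hAQ]
    simp only [matExp, Matrix.of_apply]
    calc ∏ i, matExp x A i ^ Q i ⟨r + (j : ℕ), by have := j.isLt; omega⟩
        = matExp (matExp x A) Q ⟨r + (j : ℕ), by have := j.isLt; omega⟩ := rfl
      _ = matExp (matExp x ⅟P) D ⟨r + (j : ℕ), by have := j.isLt; omega⟩ := by rw [key]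
      _ = 1 := by
          simp only [matExp]
          apply Finset.prod_eq_one
          intro i _
          rw [hSNF, dif_neg (by simp; omega)]
          simp
  · intro hb
    have hy : ∀ i : Fin r, ∃ yi : ℂˣ,
        yi ^ D ⟨(i : ℕ), lt_of_lt_of_le i.isLt hrn⟩ ⟨(i : ℕ), lt_of_lt_of_le i.isLt hrm⟩
          = matExp b Q ⟨(i : ℕ), lt_of_lt_of_le i.isLt hrm⟩ := by
      intro i
      have hD0 : D ⟨(i : ℕ), lt_of_lt_of_le i.isLt hrn⟩
          ⟨(i : ℕ), lt_of_lt_of_le i.isLt hrm⟩ = d i := by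
        rw [hSNF, dif_pos ⟨rfl, i.isLt⟩]
      obtain ⟨yi, hyi⟩ := exists_zpow_eq
        (matExp b Q ⟨(i : ℕ), lt_of_lt_of_le i.isLt hrm⟩) (d i) (hd i)
      exact ⟨yi, by rw [hD0, hyi]⟩
    choose yc hyc using hy
    set y : Fin n → ℂˣ := fun i => if h : (i : ℕ) < r then yc ⟨(i : ℕ), h⟩ else 1 with hydef
    have hyD : matExp y D = matExp b Q := by
      funext j
      by_cases hj : (j : ℕ) < r
      · have hjn : (j : ℕ) < n := by omega
        simp only [matExp]
        rw [Finset.prod_eq_single ⟨(j : ℕ), hjn⟩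
          (fun i _ hne => by
            rw [hSNF, dif_neg, zpow_zero]
            rintro ⟨h1, -⟩
            exact hne (Fin.ext h1))
          (by simp)]
        have := hyc ⟨(j : ℕ), hj⟩
        simp only [hydef, dif_pos hj]
        convert this using 3
        rfl
      · simp only [matExp]
        have h1 : ∏ i, y i ^ D i j = 1 :=
          Finset.prod_eq_one fun i _ => by rw [hSNF, dif_neg (by omega), zpow_zero]
        rw [h1]
        have hj2 : (j : ℕ) - r < m - r := by omega
        have hbj := congrFun hb ⟨(j : ℕ) - r, hj2⟩
        simp only [matExp, Matrix.of_apply] at hbj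
        have hje : (⟨r + ((j : ℕ) - r), by omega⟩ : Fin m) = j := Fin.ext (by simp; omega)
        rw [hje] at hbj
        exact hbj.symm
    refine ⟨matExp y P, ?_⟩
    have key : matExp (matExp y D) ⅟Q = matExp (matExp y P) A := by
      rw [matExp_mul, matExp_mul, hD, Matrix.mul_assoc, mul_invOf_self, Matrix.mul_one]
    rw [← key, hyD, matExp_mul, mul_invOf_self, matExp_one]
end

section
/- Let A ∈ M_{n×m}(ℤ) with rank r and Smith Normal Form with nonzero diagonal entries d₁, …, d_r, and let b ∈ (ℂˣ)^m be such that the solution set V = {x ∈ (ℂˣ)^n : x^A = b} is nonempty. Then, with the subspace topology inherited from (ℂˣ)^n ⊂ ℂⁿ, the set V has exactly |d₁ · d₂ ⋯ d_r| connected components. -/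
open Finset in
private lemma zpow_sum₀ {x : ℂ} (hx : x ≠ 0) {ι : Type*} (s : Finset ι) (f : ι → ℤ) :
    x ^ (∑ i ∈ s, f i) = ∏ i ∈ s, x ^ f i := by
  classical
  induction s using Finset.induction with
  | empty => simp
  | @insert _ _ h ih => rw [Finset.sum_insert h, Finset.prod_insert h, zpow_add₀ hx, ih]

/-- matrix exponent -/
private noncomputable def mexp {k l : ℕ} (x : Fin k → ℂ) (M : Matrix (Fin k) (Fin l) ℤ) :
    Fin l → ℂ :=
  fun j => ∏ i, x i ^ M i j

private lemma mexp_ne_zero {k l : ℕ} {x : Fin k → ℂ} (hx : ∀ i, x i ≠ 0)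
    (M : Matrix (Fin k) (Fin l) ℤ) (j : Fin l) : mexp x M j ≠ 0 :=
  Finset.prod_ne_zero_iff.2 fun i _ => zpow_ne_zero _ (hx i)

private lemma mexp_mul {k l p : ℕ} {x : Fin k → ℂ} (hx : ∀ i, x i ≠ 0)
    (M : Matrix (Fin k) (Fin l) ℤ) (N : Matrix (Fin l) (Fin p) ℤ) :
    mexp x (M * N) = mexp (mexp x M) N := by
  funext j
  unfold mexp
  calc ∏ i, x i ^ (M * N) i j
      = ∏ i, ∏ t, (x i ^ M i t) ^ N t j := by
        refine Finset.prod_congr rfl fun i _ => ?_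
        rw [Matrix.mul_apply, zpow_sum₀ (hx i)]
        exact Finset.prod_congr rfl fun t _ => by rw [← zpow_mul]
    _ = ∏ t, ∏ i, (x i ^ M i t) ^ N t j := Finset.prod_comm
    _ = ∏ t, (∏ i, x i ^ M i t) ^ N t j :=
        Finset.prod_congr rfl fun t _ => Finset.prod_zpow _ _ _

private lemma mexp_one {k : ℕ} (x : Fin k → ℂ) : mexp x 1 = x := by
  funext j
  unfold mexp
  rw [Finset.prod_eq_single j (fun i _ hij => by
    rw [Matrix.one_apply_ne hij, zpow_zero]) (fun h => absurd (Finset.mem_univ j) h)]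
  rw [Matrix.one_apply_eq, zpow_one]

private lemma continuous_mexp_coord {k l : ℕ} (M : Matrix (Fin k) (Fin l) ℤ) (j : Fin l)
    {X : Type*} [TopologicalSpace X] {f : X → Fin k → ℂ} (hf : Continuous f)
    (h0 : ∀ x i, f x i ≠ 0) : Continuous fun x => mexp (f x) M j := by
  unfold mexp
  refine continuous_finset_prod _ fun t _ => ?_
  refine continuous_iff_continuousAt.mpr fun x => ?_
  have h1 : ContinuousAt (fun x => f x t) x := ((continuous_apply t).comp hf).continuousAt
  exact h1.zpow₀ (M t j) (Or.inl (h0 x t))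

private lemma card_pow_roots (N : ℕ) (hN : N ≠ 0) (c : ℂ) (hc : c ≠ 0) :
    {z : ℂ | z ^ N = c}.Finite ∧ Nat.card {z : ℂ | z ^ N = c} = N := by
  have hζ := Complex.isPrimitiveRoot_exp N hN
  have hset : {z : ℂ | z ^ N = c} = ↑(Polynomial.nthRoots N c).toFinset := by
    ext z
    simp [Polynomial.mem_nthRoots (Nat.pos_of_ne_zero hN)]
  have hcard : (Polynomial.nthRoots N c).toFinset.card = N := by
    rw [Multiset.toFinset_card_of_nodup (hζ.nthRoots_nodup hc), hζ.card_nthRoots c,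
      if_pos (IsAlgClosed.exists_pow_nat_eq c (Nat.pos_of_ne_zero hN))]
  rw [hset]
  exact ⟨(Polynomial.nthRoots N c).toFinset.finite_toSet,
    by rw [Nat.card_coe_set_eq, Set.ncard_coe_finset, hcard]⟩

private lemma card_zpow_roots (k : ℤ) (hk : k ≠ 0) (c : ℂ) (hc : c ≠ 0) :
    {z : ℂ | z ^ k = c}.Finite ∧ Nat.card {z : ℂ | z ^ k = c} = k.natAbs := by
  rcases lt_or_gt_of_ne hk with hneg | hpos
  · have hset : {z : ℂ | z ^ k = c} = {z : ℂ | z ^ k.natAbs = c⁻¹} := by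
      ext z
      have : z ^ k = (z ^ (k.natAbs : ℤ))⁻¹ := by
        rw [← zpow_neg]
        congr 1
        omega
      rw [Set.mem_setOf_eq, Set.mem_setOf_eq, this, zpow_natCast, inv_eq_iff_eq_inv]
    rw [hset]
    exact card_pow_roots k.natAbs (by omega) c⁻¹ (inv_ne_zero hc)
  · have hset : {z : ℂ | z ^ k = c} = {z : ℂ | z ^ k.natAbs = c} := by
      ext z
      rw [Set.mem_setOf_eq, Set.mem_setOf_eq, ← zpow_natCast]
      congr! 2
      omega
    rw [hset]
    exact card_pow_roots k.natAbs (by omega) c hc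

private lemma connectedSpace_ne_zero : ConnectedSpace {z : ℂ // z ≠ 0} := by
  have h : IsConnected {(0 : ℂ)}ᶜ :=
    isConnected_compl_singleton_of_one_lt_rank
      (by rw [Complex.rank_real_complex]; norm_num) 0
  have hset : IsConnected {z : ℂ | z ≠ 0} := by
    have : {z : ℂ | z ≠ 0} = {(0 : ℂ)}ᶜ := by ext z; simp
    rw [this]; exact h
  exact Subtype.connectedSpace hset

theorem stmt10 {n m : ℕ} (A : Matrix (Fin n) (Fin m) ℤ) (r : ℕ)
    (hr : r = (A.map (Int.cast : ℤ → ℚ)).rank)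
    (P : Matrix (Fin n) (Fin n) ℤ) (Q : Matrix (Fin m) (Fin m) ℤ)
    (hP : P.det = 1 ∨ P.det = -1) (hQ : Q.det = 1 ∨ Q.det = -1)
    (d : Fin r → ℤ) (hd : ∀ i, d i ≠ 0)
    (hSNF : ∀ (i : Fin n) (j : Fin m),
      (P * A * Q) i j =
        if h : (i : ℕ) = (j : ℕ) ∧ (i : ℕ) < r then d ⟨(i : ℕ), h.2⟩ else 0)
    (b : Fin m → ℂ) (hb : ∀ j, b j ≠ 0)
    (V : Set (Fin n → ℂ))
    (hV : V = {x : Fin n → ℂ | (∀ i, x i ≠ 0) ∧ ∀ j, ∏ i, x i ^ A i j = b j})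
    (hne : V.Nonempty) :
    Nat.card (ConnectedComponents ↥V) = (∏ j, d j).natAbs := by
  classical
  subst hV
  have hrn : r ≤ n := by
    rw [hr]
    simpa using (A.map (Int.cast : ℤ → ℚ)).rank_le_card_height
  have hrm : r ≤ m := by
    rw [hr]
    simpa using (A.map (Int.cast : ℤ → ℚ)).rank_le_card_width
  haveI : Invertible P := P.invertibleOfIsUnitDet (Int.isUnit_iff.2 hP)
  haveI : Invertible Q := Q.invertibleOfIsUnitDet (Int.isUnit_iff.2 hQ)
  set P' := ⅟P with hP'def
  set Q' := ⅟Q with hQ'def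
  set D := P * A * Q with hDdef
  set c : Fin m → ℂ := mexp b Q with hcdef
  have hc0 : ∀ j, c j ≠ 0 := mexp_ne_zero hb Q
  -- evaluation of mexp against the diagonal matrix D
  have hDeval : ∀ (y : Fin n → ℂ) (j : Fin m) (hj : (j : ℕ) < r),
      mexp y D j = y ⟨(j : ℕ), lt_of_lt_of_le hj hrn⟩ ^ d ⟨(j : ℕ), hj⟩ := by
    intro y j hj
    unfold mexp
    rw [Finset.prod_eq_single (⟨(j : ℕ), lt_of_lt_of_le hj hrn⟩ : Fin n)
      (fun i _ hine => by
        rw [hSNF, dif_neg, zpow_zero]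
        rintro ⟨h1, -⟩
        exact hine (Fin.ext h1))
      (fun h => absurd (Finset.mem_univ _) h)]
    rw [hSNF, dif_pos ⟨rfl, hj⟩]
  have hDeval0 : ∀ (y : Fin n → ℂ) (j : Fin m), r ≤ (j : ℕ) → mexp y D j = 1 := by
    intro y j hj
    refine Finset.prod_eq_one fun i _ => ?_
    rw [hSNF, dif_neg, zpow_zero]
    rintro ⟨h1, h2⟩
    omega
  -- any solution transported by P' satisfies the diagonal system
  have hkey : ∀ x : Fin n → ℂ, (∀ i, x i ≠ 0) → (∀ j, ∏ i, x i ^ A i j = b j) →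
      mexp (mexp x P') D = c := by
    intro x hx0 hxA
    have hPD : P' * D = A * Q := by
      rw [hDdef, ← Matrix.mul_assoc, ← Matrix.mul_assoc, invOf_mul_self, Matrix.one_mul]
    calc mexp (mexp x P') D = mexp x (P' * D) := (mexp_mul hx0 _ _).symm
      _ = mexp x (A * Q) := by rw [hPD]
      _ = mexp (mexp x A) Q := mexp_mul hx0 _ _
      _ = c := by rw [hcdef]; exact congrArg (fun t => mexp t Q) (funext hxA)
  obtain ⟨x₀, hx₀⟩ := hne
  have hc1 : ∀ j : Fin m, r ≤ (j : ℕ) → c j = 1 := by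
    intro j hj
    rw [← hkey x₀ hx₀.1 hx₀.2, hDeval0 _ j hj]
  set e : Fin r → ℂ := fun i => c ⟨(i : ℕ), lt_of_lt_of_le i.isLt hrm⟩ with hedef
  have he0 : ∀ i, e i ≠ 0 := fun i => hc0 _
  have hroot := fun i : Fin r => card_zpow_roots (d i) (hd i) (e i) (he0 i)
  haveI hfinS : ∀ i : Fin r, Finite {z : ℂ // z ^ d i = e i} := fun i => (hroot i).1.to_subtype
  -- members of V give solutions to the diagonal equations
  have hFmem : ∀ x : Fin n → ℂ, (∀ i, x i ≠ 0) → (∀ j, ∏ i, x i ^ A i j = b j) →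
      ∀ i : Fin r, (mexp x P' ⟨(i : ℕ), lt_of_lt_of_le i.isLt hrn⟩) ^ d i = e i := by
    intro x hx0 hxA i
    have h2 := congrFun (hkey x hx0 hxA) ⟨(i : ℕ), lt_of_lt_of_le i.isLt hrm⟩
    rw [hDeval _ _ i.isLt] at h2
    exact h2
  set F : {x : Fin n → ℂ | (∀ i, x i ≠ 0) ∧ ∀ j, ∏ i, x i ^ A i j = b j} →
      ∀ i : Fin r, {z : ℂ // z ^ d i = e i} :=
    fun x i => ⟨mexp x.1 P' ⟨(i : ℕ), lt_of_lt_of_le i.isLt hrn⟩, hFmem x.1 x.2.1 x.2.2 i⟩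
    with hFdef
  have hFcont : Continuous F := by
    refine continuous_pi fun i => Continuous.subtype_mk ?_ _
    exact continuous_mexp_coord P' _ continuous_subtype_val fun x t => x.2.1 t
  -- the fill-in construction
  set w : (Fin r → ℂ) → (Fin n → {z : ℂ // z ≠ 0}) → Fin n → ℂ :=
    fun u z i => if h : (i : ℕ) < r then u ⟨(i : ℕ), h⟩ else (z i).1 with hwdef
  have hu0 : ∀ u : Fin r → ℂ, (∀ i, u i ^ d i = e i) → ∀ i, u i ≠ 0 := by
    intro u hu i h0
    exact he0 i (by rw [← hu i, h0, zero_zpow _ (hd i)])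
  have hw0 : ∀ u, (∀ i, u i ≠ 0) → ∀ z i, w u z i ≠ 0 := by
    intro u hu z i
    rw [hwdef]
    dsimp only
    split
    · exact hu _
    · exact (z i).2
  have hwD : ∀ u, (∀ i, u i ^ d i = e i) → ∀ z, mexp (w u z) D = c := by
    intro u hu z
    funext j
    rcases lt_or_ge (j : ℕ) r with hj | hj
    · rw [hDeval _ _ hj]
      have hwj : w u z ⟨(j : ℕ), lt_of_lt_of_le hj hrn⟩ = u ⟨(j : ℕ), hj⟩ := by
        rw [hwdef]; exact dif_pos hj
      rw [hwj, hu ⟨(j : ℕ), hj⟩]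
    · rw [hDeval0 _ _ hj, hc1 j hj]
  have hwV : ∀ u (hu : ∀ i, u i ^ d i = e i) z,
      mexp (w u z) P ∈ {x : Fin n → ℂ | (∀ i, x i ≠ 0) ∧ ∀ j, ∏ i, x i ^ A i j = b j} := by
    intro u hu z
    have hw0' := hw0 u (hu0 u hu) z
    have hPA : (P * A * Q) * Q' = P * A := by
      rw [Matrix.mul_assoc, mul_invOf_self, Matrix.mul_one]
    have hQQ : Q * Q' = 1 := mul_invOf_self Q
    have hmain : mexp (mexp (w u z) P) A = b := by
      calc mexp (mexp (w u z) P) A = mexp (w u z) (P * A) := (mexp_mul hw0' _ _).symm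
        _ = mexp (w u z) (D * Q') := by rw [hDdef, hPA]
        _ = mexp (mexp (w u z) D) Q' := mexp_mul hw0' _ _
        _ = mexp c Q' := by rw [hwD u hu z]
        _ = mexp (mexp b Q) Q' := by rw [hcdef]
        _ = mexp b (Q * Q') := (mexp_mul hb _ _).symm
        _ = b := by rw [hQQ, mexp_one]
    exact ⟨mexp_ne_zero hw0' P, fun j => congrFun hmain j⟩
  have hFw : ∀ u (hu : ∀ i, u i ^ d i = e i) z,
      F ⟨mexp (w u z) P, hwV u hu z⟩ = fun i => ⟨u i, hu i⟩ := by
    intro u hu z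
    funext i
    apply Subtype.ext
    have hw0' := hw0 u (hu0 u hu) z
    show mexp (mexp (w u z) P) P' ⟨(i : ℕ), lt_of_lt_of_le i.isLt hrn⟩ = u i
    rw [← mexp_mul hw0' P P', mul_invOf_self, mexp_one]
    have : w u z ⟨(i : ℕ), lt_of_lt_of_le i.isLt hrn⟩ = u ⟨(i : ℕ), i.isLt⟩ := by
      rw [hwdef]; exact dif_pos i.isLt
    rw [this]
  -- the lifted map
  have hbij : Function.Bijective hFcont.connectedComponentsLift := by
    constructor
    · intro a a'
      obtain ⟨x, rfl⟩ := ConnectedComponents.surjective_coe a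
      obtain ⟨x', rfl⟩ := ConnectedComponents.surjective_coe a'
      intro hGG
      rw [hFcont.connectedComponentsLift_apply_coe,
        hFcont.connectedComponentsLift_apply_coe] at hGG
      set u : Fin r → ℂ := fun i => (F x i).1 with hudef
      have hu : ∀ i, u i ^ d i = e i := fun i => (F x i).2
      haveI := connectedSpace_ne_zero
      set g : (Fin n → {z : ℂ // z ≠ 0}) →
          {x : Fin n → ℂ | (∀ i, x i ≠ 0) ∧ ∀ j, ∏ i, x i ^ A i j = b j} :=
        fun z => ⟨mexp (w u z) P, hwV u hu z⟩ with hgdef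
      have hgcont : Continuous g := by
        refine Continuous.subtype_mk ?_ _
        refine continuous_pi fun j => continuous_mexp_coord P j ?_ ?_
        · refine continuous_pi fun i => ?_
          by_cases h : (i : ℕ) < r
          · have : (fun z : Fin n → {z : ℂ // z ≠ 0} => w u z i)
                = fun _ => u ⟨(i : ℕ), h⟩ := by
              funext z; rw [hwdef]; exact dif_pos h
            rw [this]; exact continuous_const
          · have : (fun z : Fin n → {z : ℂ // z ≠ 0} => w u z i)
                = fun z => (z i).1 := by
              funext z; rw [hwdef]; exact dif_neg h
            rw [this]; exact (continuous_apply i).subtype_val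
        · exact fun z i => hw0 u (hu0 u hu) z i
      have hpre : IsPreconnected (Set.range g) := isPreconnected_range hgcont
      have hmemgen : ∀ y : {x : Fin n → ℂ | (∀ i, x i ≠ 0) ∧ ∀ j, ∏ i, x i ^ A i j = b j},
          F y = F x → y ∈ Set.range g := by
        intro y hFy
        refine ⟨fun i => ⟨mexp y.1 P' i, mexp_ne_zero y.2.1 P' i⟩, ?_⟩
        apply Subtype.ext
        have hwy : w u (fun i => ⟨mexp y.1 P' i, mexp_ne_zero y.2.1 P' i⟩)
            = mexp y.1 P' := by
          funext i
          rw [hwdef]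
          dsimp only
          split
          · next h => exact (congrArg Subtype.val (congrFun hFy ⟨(i : ℕ), h⟩)).symm
          · rfl
        show mexp (w u _) P = y.1
        rw [hwy, ← mexp_mul y.2.1 P' P, invOf_mul_self, mexp_one]
      have hxmem : x ∈ Set.range g := hmemgen x rfl
      have hx'mem : x' ∈ Set.range g := hmemgen x' hGG.symm
      exact ConnectedComponents.coe_eq_coe.2
        (connectedComponent_eq (hpre.subset_connectedComponent hxmem hx'mem))
    · intro s
      have hus : ∀ i, (fun i => (s i).1) i ^ d i = e i := fun i => (s i).2
      refine ⟨ConnectedComponents.mk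
        ⟨mexp (w (fun i => (s i).1) (fun _ => ⟨1, one_ne_zero⟩)) P,
          hwV _ hus _⟩, ?_⟩
      rw [hFcont.connectedComponentsLift_apply_coe, hFw _ hus _]
  rw [Nat.card_eq_of_bijective _ hbij, Nat.card_pi]
  have hcards : ∏ i : Fin r, Nat.card {z : ℂ // z ^ d i = e i} = ∏ i, (d i).natAbs :=
    Finset.prod_congr rfl fun i _ => (hroot i).2
  rw [hcards]
  exact (map_prod Int.natAbsHom d Finset.univ).symm
end

section
/- Let S ⊂ ℝ^d be a finite set whose convex hull has nonempty interior. For a lifting ω : S → ℝ write â = (a, ω(a)) and Ŝ = {â : a ∈ S}; for α ∈ ℝ^d let F_ω(α) = {a ∈ S : ⟨â, (α,1)⟩ ≤ ⟨b̂, (α,1)⟩ for all b ∈ S} (the set of points of S whose lifts attain the minimum of the linear functional ⟨·,(α,1)⟩ on Ŝ). Then for Lebesgue-almost every ω ∈ ℝ^S, the collection 𝒟 = {F_ω(α) : α ∈ ℝ^d, conv F_ω(α) has nonempty interior} is a simplicial subdivision of S; that is: every C ∈ 𝒟 consists of exactly d+1 affinely independent points; for distinct C₁, C₂ ∈ 𝒟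 the intersection conv C₁ ∩ conv C₂, if nonempty, equals conv(C₁ ∩ C₂); and the union of conv C over C ∈ 𝒟 equals conv S. -/
open MeasureTheory Finset

variable {d : ℕ}

/-- lifted value of point `a` w.r.t. functional `α` and lifting `w` -/
def lVal (w : (Fin d → ℝ) → ℝ) (α a : Fin d → ℝ) : ℝ := (∑ i, a i * α i) + w a

open scoped Classical in
/-- set of minimizers of the lifted value over `S` -/
noncomputable def cell (S : Finset (Fin d → ℝ)) (w : (Fin d → ℝ) → ℝ) (α : Fin d → ℝ) :
    Finset (Fin d → ℝ) :=
  S.filter fun a => ∀ b ∈ S, lVal w α a ≤ lVal w α b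

lemma cell_subset {S : Finset (Fin d → ℝ)} {w α} : cell S w α ⊆ S := filter_subset _ _

lemma mem_cell {S : Finset (Fin d → ℝ)} {w α a} :
    a ∈ cell S w α ↔ a ∈ S ∧ ∀ b ∈ S, lVal w α a ≤ lVal w α b := by
  simp [cell]

/-- linearity of the inner-product part over a convex combination -/
lemma sum_lVal_comb (t : Finset (Fin d → ℝ)) (w : (Fin d → ℝ) → ℝ) (α : Fin d → ℝ)
    (lam : (Fin d → ℝ) → ℝ) :
    ∑ a ∈ t, lam a * lVal w α a
      = (∑ i, (∑ a ∈ t, lam a • a) i * α i) + ∑ a ∈ t, lam a * w a := by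
  simp only [lVal, mul_add, Finset.sum_add_distrib]
  congr 1
  simp only [Finset.sum_apply, Pi.smul_apply, smul_eq_mul, Finset.sum_mul, Finset.mul_sum]
  rw [Finset.sum_comm]
  exact Finset.sum_congr rfl fun a _ => Finset.sum_congr rfl fun i _ => by ring

/-- Workhorse: if a convex combination over `t ⊆ S` has average lifted value at most the
minimum `m` over `S`, then the combination point lies in the hull of `t ∩ cell`. -/
lemma workhorse (S t : Finset (Fin d → ℝ)) (w : (Fin d → ℝ) → ℝ) (α : Fin d → ℝ)
    (hts : t ⊆ S) (lam : (Fin d → ℝ) → ℝ)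
    (h0 : ∀ a ∈ t, 0 ≤ lam a) (h1 : ∑ a ∈ t, lam a = 1) (m : ℝ)
    (hm : ∀ b ∈ S, m ≤ lVal w α b) (hsum : ∑ a ∈ t, lam a * lVal w α a ≤ m) :
    (∑ a ∈ t, lam a • a) ∈ convexHull ℝ (↑(t ∩ cell S w α) : Set (Fin d → ℝ)) := by
  classical
  have hge : m ≤ ∑ a ∈ t, lam a * lVal w α a := by
    calc m = ∑ a ∈ t, lam a * m := by rw [← Finset.sum_mul, h1, one_mul]
    _ ≤ ∑ a ∈ t, lam a * lVal w α a :=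
      Finset.sum_le_sum fun a ha => mul_le_mul_of_nonneg_left (hm a (hts ha)) (h0 a ha)
  have heq : ∑ a ∈ t, lam a * (lVal w α a - m) = 0 := by
    simp only [mul_sub, Finset.sum_sub_distrib, ← Finset.sum_mul, h1, one_mul]
    linarith
  have hzero : ∀ a ∈ t, lam a * (lVal w α a - m) = 0 :=
    (Finset.sum_eq_zero_iff_of_nonneg fun a ha =>
      mul_nonneg (h0 a ha) (sub_nonneg.2 (hm a (hts ha)))).1 heq
  -- every point with positive weight is in the cell
  have hsupp : ∀ a ∈ t, lam a ≠ 0 → a ∈ t ∩ cell S w α := by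
    intro a ha hne
    have hv : lVal w α a = m := by
      have := hzero a ha
      rcases mul_eq_zero.1 this with h | h
      · exact absurd h hne
      · linarith [sub_eq_zero.1 h]
    refine Finset.mem_inter.2 ⟨ha, mem_cell.2 ⟨hts ha, fun b hb => hv ▸ hm b hb⟩⟩
  set u := t ∩ cell S w α with hu
  have hsub : u ⊆ t := Finset.inter_subset_left
  have hvanish : ∀ a ∈ t, a ∉ u → lam a = 0 := by
    intro a ha hnu
    by_contra hne
    exact hnu (hsupp a ha hne)
  have hsum1 : ∑ a ∈ u, lam a = 1 := by
    rw [← h1]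
    exact (Finset.sum_subset hsub fun a ha hnu => hvanish a ha hnu).symm ▸ rfl
  have hpt : ∑ a ∈ u, lam a • a = ∑ a ∈ t, lam a • a := by
    refine Finset.sum_subset hsub fun a ha hnu => ?_
    rw [hvanish a ha hnu, zero_smul]
  rw [← hpt]
  have := u.centerMass_id_mem_convexHull (w := lam)
    (fun a ha => h0 a (hsub ha)) (by rw [hsum1]; norm_num)
  rw [Finset.centerMass_eq_of_sum_1 _ _ hsum1] at this
  simpa using this

/-- extraction of convex weights from hull membership -/
lemma exists_weights {t : Finset (Fin d → ℝ)} {x : Fin d → ℝ}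
    (hx : x ∈ convexHull ℝ (↑t : Set (Fin d → ℝ))) :
    ∃ lam : (Fin d → ℝ) → ℝ, (∀ a ∈ t, 0 ≤ lam a) ∧ ∑ a ∈ t, lam a = 1 ∧
      ∑ a ∈ t, lam a • a = x := by
  rw [Finset.convexHull_eq] at hx
  obtain ⟨lam, h0, h1, hx⟩ := hx
  refine ⟨lam, h0, h1, ?_⟩
  rw [Finset.centerMass_eq_of_sum_1 _ _ h1] at hx
  simpa using hx

/-- the intersection lemma : hulls of two cells intersect in the hull of the intersection -/
lemma cells_inter (S : Finset (Fin d → ℝ)) (w : (Fin d → ℝ) → ℝ) (α₁ α₂ : Fin d → ℝ) :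
    convexHull ℝ (↑(cell S w α₁) : Set (Fin d → ℝ)) ∩ convexHull ℝ (↑(cell S w α₂))
      ⊆ convexHull ℝ (↑(cell S w α₁ ∩ cell S w α₂)) := by
  classical
  rintro x ⟨hx1, hx2⟩
  obtain ⟨lam, hl0, hl1, hlx⟩ := exists_weights hx1
  obtain ⟨mu, hm0, hm1, hmx⟩ := exists_weights hx2
  set C₁ := cell S w α₁
  set C₂ := cell S w α₂
  -- C₁, C₂ nonempty
  obtain ⟨a₁, ha₁⟩ : C₁.Nonempty := by
    by_contra h
    simp only [Finset.not_nonempty_iff_eq_empty] at h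
    rw [h] at hl1; simp at hl1
  obtain ⟨a₂, ha₂⟩ : C₂.Nonempty := by
    by_contra h
    simp only [Finset.not_nonempty_iff_eq_empty] at h
    rw [h] at hm1; simp at hm1
  set m₁ := lVal w α₁ a₁ with hm₁def
  set m₂ := lVal w α₂ a₂ with hm₂def
  have hc₁ : ∀ a ∈ C₁, lVal w α₁ a = m₁ := fun a ha =>
    le_antisymm ((mem_cell.1 ha).2 a₁ (cell_subset ha₁)) ((mem_cell.1 ha₁).2 a (cell_subset ha))
  have hc₂ : ∀ a ∈ C₂, lVal w α₂ a = m₂ := fun a ha =>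
    le_antisymm ((mem_cell.1 ha).2 a₂ (cell_subset ha₂)) ((mem_cell.1 ha₂).2 a (cell_subset ha))
  have hmin₁ : ∀ b ∈ S, m₁ ≤ lVal w α₁ b := (mem_cell.1 ha₁).2
  have hmin₂ : ∀ b ∈ S, m₂ ≤ lVal w α₂ b := (mem_cell.1 ha₂).2
  set s₁ := ∑ a ∈ C₁, lam a * w a with hs₁
  set s₂ := ∑ a ∈ C₂, mu a * w a with hs₂
  have key₁ : (∑ i, x i * α₁ i) + s₁ = m₁ := by
    have : ∑ a ∈ C₁, lam a * lVal w α₁ a = m₁ := by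
      rw [Finset.sum_congr rfl fun a ha => by rw [hc₁ a ha], ← Finset.sum_mul, hl1, one_mul]
    rw [← this, sum_lVal_comb, hlx]
  have key₂ : (∑ i, x i * α₂ i) + s₂ = m₂ := by
    have : ∑ a ∈ C₂, mu a * lVal w α₂ a = m₂ := by
      rw [Finset.sum_congr rfl fun a ha => by rw [hc₂ a ha], ← Finset.sum_mul, hm1, one_mul]
    rw [← this, sum_lVal_comb, hmx]
  -- cross estimates
  have cross₁ : m₁ ≤ (∑ i, x i * α₁ i) + s₂ := by
    have : ∑ a ∈ C₂, mu a * lVal w α₁ a ≥ m₁ := by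
      calc m₁ = ∑ a ∈ C₂, mu a * m₁ := by rw [← Finset.sum_mul, hm1, one_mul]
      _ ≤ _ := Finset.sum_le_sum fun a ha =>
          mul_le_mul_of_nonneg_left (hmin₁ a (cell_subset ha)) (hm0 a ha)
    calc m₁ ≤ ∑ a ∈ C₂, mu a * lVal w α₁ a := this
    _ = _ := by rw [sum_lVal_comb, hmx]
  have cross₂ : m₂ ≤ (∑ i, x i * α₂ i) + s₁ := by
    have : ∑ a ∈ C₁, lam a * lVal w α₂ a ≥ m₂ := by
      calc m₂ = ∑ a ∈ C₁, lam a * m₂ := by rw [← Finset.sum_mul, hl1, one_mul]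
      _ ≤ _ := Finset.sum_le_sum fun a ha =>
          mul_le_mul_of_nonneg_left (hmin₂ a (cell_subset ha)) (hl0 a ha)
    calc m₂ ≤ ∑ a ∈ C₁, lam a * lVal w α₂ a := this
    _ = _ := by rw [sum_lVal_comb, hlx]
  have hs : s₁ = s₂ := le_antisymm (by linarith) (by linarith)
  -- apply the workhorse with t = C₁, α = α₂, m = m₂
  have happ := workhorse S C₁ w α₂ cell_subset lam hl0 hl1 m₂ hmin₂ ?_
  · rwa [hlx] at happ
  · rw [sum_lVal_comb, hlx]
    linarith

section cover

variable (S : Finset (Fin d → ℝ)) (w : (Fin d → ℝ) → ℝ)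

/-- the lift map -/
def liftMap (w : (Fin d → ℝ) → ℝ) : (Fin d → ℝ) → (Fin d → ℝ) × ℝ := fun a => (a, w a)

lemma liftMap_injOn : ∀ x ∈ (S : Set (Fin d → ℝ)), ∀ y ∈ (S : Set (Fin d → ℝ)),
    liftMap w x = liftMap w y → x = y := fun x _ y _ h => congrArg Prod.fst h

lemma memK_iff (p : (Fin d → ℝ) × ℝ) :
    p ∈ convexHull ℝ (liftMap w '' (S : Set (Fin d → ℝ))) ↔
      ∃ lam : (Fin d → ℝ) → ℝ, (∀ a ∈ S, 0 ≤ lam a) ∧ ∑ a ∈ S, lam a = 1 ∧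
        ∑ a ∈ S, lam a • a = p.1 ∧ ∑ a ∈ S, lam a * w a = p.2 := by
  classical
  have himg : liftMap w '' (S : Set (Fin d → ℝ)) = ↑(S.image (liftMap w)) := by
    rw [Finset.coe_image]
  rw [himg]
  constructor
  · intro hp
    rw [Finset.convexHull_eq] at hp
    obtain ⟨mu, h0, h1, hcm⟩ := hp
    refine ⟨fun a => mu (liftMap w a), ?_, ?_, ?_, ?_⟩
    · exact fun a ha => h0 _ (Finset.mem_image_of_mem _ ha)
    · rw [← h1, Finset.sum_image (fun x hx y hy h => liftMap_injOn S w x hx y hy h)]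
    · rw [Finset.centerMass_eq_of_sum_1 _ _ h1,
        Finset.sum_image (f := fun y => mu y • id y)
          (fun x hx y hy h => liftMap_injOn S w x hx y hy h)] at hcm
      have := congrArg Prod.fst hcm
      simpa [liftMap, Prod.fst_sum] using this
    · rw [Finset.centerMass_eq_of_sum_1 _ _ h1,
        Finset.sum_image (f := fun y => mu y • id y)
          (fun x hx y hy h => liftMap_injOn S w x hx y hy h)] at hcm
      have := congrArg Prod.snd hcm
      simpa [liftMap, Prod.snd_sum] using this
  · rintro ⟨lam, h0, h1, hx, ht⟩
    have := S.centerMass_mem_convexHull (w := lam) (z := liftMap w) h0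
      (by rw [h1]; norm_num) (fun a ha => Finset.mem_coe.2 (Finset.mem_image_of_mem _ ha))
    rw [Finset.centerMass_eq_of_sum_1 _ _ h1] at this
    convert this using 2
    apply Prod.ext
    · simpa [liftMap, Prod.fst_sum] using hx.symm
    · simpa [liftMap, Prod.snd_sum] using ht.symm

/-- Every interior point of the hull lies in the hull of some cell. -/
lemma cover (x : Fin d → ℝ)
    (hx : x ∈ interior (convexHull ℝ (S : Set (Fin d → ℝ)))) :
    ∃ α, x ∈ convexHull ℝ (↑(cell S w α) : Set (Fin d → ℝ)) := by
  classical
  set K : Set ((Fin d → ℝ) × ℝ) := convexHull ℝ (liftMap w '' (S : Set (Fin d → ℝ))) with hK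
  have hxS : x ∈ convexHull ℝ (S : Set (Fin d → ℝ)) := interior_subset hx
  -- K compact
  have hKcpt : IsCompact K := ((S.finite_toSet.image _).isCompact_convexHull ℝ)
  have hKconv : Convex ℝ K := convex_convexHull _ _
  -- the fiber of t's over x
  set T : Set ℝ := {t | (x, t) ∈ K} with hT
  have hTne : T.Nonempty := by
    obtain ⟨lam, h0, h1, hxx⟩ := exists_weights hxS
    exact ⟨∑ a ∈ S, lam a * w a, (memK_iff S w _).2 ⟨lam, h0, h1, hxx, rfl⟩⟩
  have hTclosed : IsClosed T := by
    have : T = (fun t => (x, t)) ⁻¹' K := rfl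
    rw [this]
    exact hKcpt.isClosed.preimage (by fun_prop)
  have hTbdd : BddBelow T := by
    have : T ⊆ Prod.snd '' K := fun t ht => ⟨(x, t), ht, rfl⟩
    exact (hKcpt.image continuous_snd).bddBelow.mono this
  set g : ℝ := sInf T with hg
  have hgT : g ∈ T := hTclosed.csInf_mem hTne hTbdd
  -- the epigraph-like body
  set Epi : Set ((Fin d → ℝ) × ℝ) := {p | ∃ t ≤ p.2, (p.1, t) ∈ K} with hEpi
  have hKE : K ⊆ Epi := fun p hp => ⟨p.2, le_refl _, hp⟩
  have hEconv : Convex ℝ Epi := by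
    rintro p hp q hq a b ha hb hab
    obtain ⟨tp, htp, hpK⟩ := hp
    obtain ⟨tq, htq, hqK⟩ := hq
    refine ⟨a * tp + b * tq, ?_, ?_⟩
    · have : a * tp + b * tq ≤ a * p.2 + b * q.2 := by
        have := mul_le_mul_of_nonneg_left htp ha
        have := mul_le_mul_of_nonneg_left htq hb
        linarith
      simpa using this
    · have := hKconv hpK hqK ha hb hab
      simpa [Prod.smul_mk, Prod.mk_add_mk] using this
  -- bound M on lifted values
  set M : ℝ := ∑ a ∈ S, |w a| with hM
  have hopen_sub : (interior (convexHull ℝ (S : Set (Fin d → ℝ)))) ×ˢ Set.Ioi M ⊆ Epi := by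
    rintro ⟨y, t⟩ ⟨hy, ht⟩
    obtain ⟨lam, h0, h1, hyy⟩ := exists_weights (interior_subset hy)
    refine ⟨∑ a ∈ S, lam a * w a, ?_, (memK_iff S w _).2 ⟨lam, h0, h1, hyy, rfl⟩⟩
    have hle : ∑ a ∈ S, lam a * w a ≤ M := by
      rw [hM]
      refine Finset.sum_le_sum fun a ha => ?_
      calc lam a * w a ≤ lam a * |w a| := by
            exact mul_le_mul_of_nonneg_left (le_abs_self _) (h0 a ha)
      _ ≤ 1 * |w a| := by
            refine mul_le_mul_of_nonneg_right ?_ (abs_nonneg _)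
            calc lam a = ∑ b ∈ {a}, lam b := by simp
            _ ≤ ∑ b ∈ S, lam b := Finset.sum_le_sum_of_subset_of_nonneg
                (Finset.singleton_subset_iff.2 ha) (fun b hb _ => h0 b hb)
            _ = 1 := h1
      _ = |w a| := one_mul _
    exact hle.trans (le_of_lt ht)
  have hzmem : ((x, M + 1) : (Fin d → ℝ) × ℝ) ∈ interior Epi := by
    have hopen : IsOpen ((interior (convexHull ℝ (S : Set (Fin d → ℝ)))) ×ˢ Set.Ioi M) :=
      isOpen_interior.prod isOpen_Ioi
    exact interior_maximal hopen_sub hopen ⟨hx, by simp⟩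
  -- p := (x, g) is not in the interior of Epi
  have hpnotint : ((x, g) : (Fin d → ℝ) × ℝ) ∉ interior Epi := by
    intro hmem
    obtain ⟨ε, hε, hball⟩ := Metric.isOpen_iff.1 isOpen_interior _ hmem
    have hq : ((x, g - ε / 2) : (Fin d → ℝ) × ℝ) ∈ Epi := by
      refine interior_subset (hball ?_)
      rw [Metric.mem_ball, Prod.dist_eq]
      have h1 : dist (g - ε / 2) g = ε / 2 := by
        rw [Real.dist_eq, abs_of_nonpos (by linarith)]; ring
      rw [dist_self, h1, max_lt_iff]
      constructor <;> linarith
    obtain ⟨t, htle, htK⟩ := hq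
    have : g ≤ t := csInf_le hTbdd htK
    linarith
  -- separating functional
  obtain ⟨f, hf⟩ := geometric_hahn_banach_open_point (hEconv.interior) isOpen_interior hpnotint
  -- f ≤ f (x, g) on all of Epi
  have hEpile : ∀ y ∈ Epi, f y ≤ f ((x, g) : (Fin d → ℝ) × ℝ) := by
    intro y hy
    have cont : Continuous fun t : ℝ => f (t • ((x, M + 1) : (Fin d → ℝ) × ℝ) + (1 - t) • y) := by
      fun_prop
    have tend : Filter.Tendsto (fun t : ℝ => f (t • ((x, M + 1) : (Fin d → ℝ) × ℝ) + (1 - t) • y))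
        (nhdsWithin 0 (Set.Ioi 0)) (nhds (f y)) := by
      have h0 : f ((0 : ℝ) • ((x, M + 1) : (Fin d → ℝ) × ℝ) + ((1:ℝ) - 0) • y) = f y := by
        simp
      have h1 : Filter.Tendsto (fun t : ℝ => f (t • ((x, M + 1) : (Fin d → ℝ) × ℝ) + (1 - t) • y))
          (nhds 0) (nhds (f y)) := by
        rw [← h0]; exact cont.tendsto 0
      exact h1.mono_left nhdsWithin_le_nhds
    refine le_of_tendsto tend ?_
    filter_upwards [Ioo_mem_nhdsGT_of_mem (by constructor <;> norm_num : (0:ℝ) ∈ Set.Ico 0 1)]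
      with t ht
    have hmem : t • ((x, M + 1) : (Fin d → ℝ) × ℝ) + (1 - t) • y ∈ interior Epi :=
      hEconv.combo_interior_closure_mem_interior hzmem (subset_closure hy) ht.1
        (by linarith [ht.2]) (by ring)
    exact (hf _ hmem).le
  set c : ℝ := f ((0 : Fin d → ℝ), (1 : ℝ)) with hc
  have hfadd : ∀ p : (Fin d → ℝ) × ℝ, ∀ s : ℝ, f (p + s • ((0 : Fin d → ℝ), (1:ℝ))) = f p + s * c := by
    intro p s
    rw [map_add, f.map_smul, smul_eq_mul]
  have hcle : c ≤ 0 := by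
    have h1 : ((x, g + 1) : (Fin d → ℝ) × ℝ) ∈ Epi := ⟨g, by norm_num, hgT⟩
    have h2 : ((x, g + 1) : (Fin d → ℝ) × ℝ) = (x, g) + (1:ℝ) • ((0 : Fin d → ℝ), (1:ℝ)) := by
      simp [Prod.ext_iff]
    have := hEpile _ h1
    rw [h2, hfadd] at this
    linarith
  have hcne : c < 0 := by
    rcases lt_or_eq_of_le hcle with h | h
    · exact h
    · exfalso
      have h2 : ((x, M+1) : (Fin d → ℝ) × ℝ) = (x, g) + (M+1-g) • ((0 : Fin d → ℝ), (1:ℝ)) := by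
        simp [Prod.ext_iff]
      have := hf _ hzmem
      rw [h2, hfadd] at this
      rw [h] at this
      linarith
  -- linear decomposition of f
  set β : Fin d → ℝ := fun i => f ((Pi.single i 1 : Fin d → ℝ), (0:ℝ)) with hβ
  have hdecomp : ∀ v : Fin d → ℝ, ∀ s : ℝ, f (v, s) = (∑ i, v i * β i) + s * c := by
    intro v s
    have hrepr : ((v, s) : (Fin d → ℝ) × ℝ)
        = (∑ i, v i • ((Pi.single i 1 : Fin d → ℝ), (0:ℝ))) + s • ((0 : Fin d → ℝ), (1:ℝ)) := by
      apply Prod.ext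
      · funext j
        simp [Prod.fst_add, Prod.fst_sum, Prod.smul_mk, Finset.sum_apply, Pi.single_apply,
          Finset.sum_ite_eq]
      · simp [Prod.snd_sum]
    rw [hrepr, map_add, map_sum]
    congr 1
    · exact Finset.sum_congr rfl fun i _ => by rw [f.map_smul, smul_eq_mul]
    · rw [f.map_smul, smul_eq_mul]
  -- the desired functional
  set α : Fin d → ℝ := fun i => β i / c with hα
  have hαval : ∀ v : Fin d → ℝ, ∑ i, v i * α i = (∑ i, v i * β i) / c := by
    intro v
    rw [Finset.sum_div]
    exact Finset.sum_congr rfl fun i _ => by rw [hα, mul_div_assoc]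
  set m₀ : ℝ := (∑ i, x i * α i) + g with hm₀
  have hkey : ∀ a ∈ S, m₀ ≤ lVal w α a := by
    intro a ha
    have haK : ((a, w a) : (Fin d → ℝ) × ℝ) ∈ K :=
      subset_convexHull _ _ ⟨a, Finset.mem_coe.2 ha, rfl⟩
    have hle : f ((a, w a) : (Fin d → ℝ) × ℝ) ≤ f ((x, g) : (Fin d → ℝ) × ℝ) :=
      hEpile _ (hKE haK)
    rw [hdecomp, hdecomp] at hle
    have h2 : ((∑ i, x i * β i) + g * c) * c⁻¹ ≤ ((∑ i, a i * β i) + w a * c) * c⁻¹ :=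
      mul_le_mul_of_nonpos_right hle (inv_nonpos.2 hcne.le)
    rw [add_mul, add_mul, mul_inv_cancel_right₀ (ne_of_lt hcne), mul_inv_cancel_right₀
      (ne_of_lt hcne)] at h2
    rw [hm₀, lVal, hαval, hαval, div_eq_mul_inv, div_eq_mul_inv]
    linarith
  -- extract weights for (x, g) and conclude
  obtain ⟨lam, h0, h1, hxx, hgg⟩ := (memK_iff S w ((x, g) : (Fin d → ℝ) × ℝ)).1 hgT
  have hsum : ∑ a ∈ S, lam a * lVal w α a ≤ m₀ := by
    rw [sum_lVal_comb, hxx, hgg]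
  refine ⟨α, ?_⟩
  have := workhorse S S w α (le_refl _) lam h0 h1 m₀ hkey hsum
  rwa [hxx, Finset.inter_eq_right.2 cell_subset] at this

end cover

/-- a convex set with nonempty interior is contained in the closure of its interior -/
lemma convex_subset_closure_interior {E : Type*} [NormedAddCommGroup E] [NormedSpace ℝ E]
    {s : Set E} (hs : Convex ℝ s) (h : (interior s).Nonempty) :
    s ⊆ closure (interior s) := by
  obtain ⟨z, hz⟩ := h
  intro y hy
  have cont : Continuous fun t : ℝ => t • z + (1 - t) • y := by fun_prop
  have h0 : ((0:ℝ) • z + ((1:ℝ) - 0) • y) = y := by simp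
  have tend : Filter.Tendsto (fun t : ℝ => t • z + (1 - t) • y)
      (nhdsWithin 0 (Set.Ioi 0)) (nhds y) := by
    have h1 := cont.tendsto 0
    rw [h0] at h1
    exact h1.mono_left nhdsWithin_le_nhds
  refine mem_closure_of_tendsto tend ?_
  filter_upwards [Ioo_mem_nhdsGT_of_mem (by constructor <;> norm_num : (0:ℝ) ∈ Set.Ico 0 1)]
    with t ht
  exact hs.combo_interior_closure_mem_interior hz (subset_closure hy) ht.1
    (by linarith [ht.2]) (by ring)

/-- union of two closed sets with empty interior has empty interior -/
lemma interior_union_empty {X : Type*} [TopologicalSpace X] {A B : Set X} (hA : IsClosed A)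
    (hiA : interior A = ∅) (hiB : interior B = ∅) :
    interior (A ∪ B) = ∅ := by
  rw [Set.eq_empty_iff_forall_notMem]
  intro x hx
  have hU : IsOpen (interior (A ∪ B)) := isOpen_interior
  have hsub : interior (A ∪ B) \ A ⊆ interior B := by
    apply interior_maximal ?_ (hU.sdiff hA)
    intro y hy
    rcases interior_subset hy.1 with h | h
    · exact absurd h hy.2
    · exact h
  have h2 : interior (A ∪ B) ⊆ A := by
    intro y hy
    by_contra h
    exact absurd (hsub ⟨hy, h⟩) (by simp [hiB])
  have h3 := interior_maximal h2 hU
  exact absurd (h3 hx) (by simp [hiA])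

/-- finite unions of closed sets with empty interior: closed and empty interior -/
lemma biUnion_closed_empty_interior {X : Type*} [TopologicalSpace X] {ι : Type*}
    (s : Finset ι) (f : ι → Set X) (hcl : ∀ i ∈ s, IsClosed (f i))
    (hint : ∀ i ∈ s, interior (f i) = ∅) :
    IsClosed (⋃ i ∈ s, f i) ∧ interior (⋃ i ∈ s, f i) = ∅ := by
  classical
  induction s using Finset.induction_on with
  | empty => simp
  | insert _ _ hni ih =>
    rename_i a s
    rw [Finset.set_biUnion_insert]
    have hihcl := (ih (fun i hi => hcl i (Finset.mem_insert_of_mem hi))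
      (fun i hi => hint i (Finset.mem_insert_of_mem hi)))
    refine ⟨(hcl a (Finset.mem_insert_self a s)).union hihcl.1, ?_⟩
    exact interior_union_empty (hcl a (Finset.mem_insert_self a s))
      (hint a (Finset.mem_insert_self a s)) hihcl.2

/-- a proper affine subspace of a finite-dimensional space has empty interior -/
lemma proper_affine_interior_empty {d : ℕ} (A : AffineSubspace ℝ (Fin d → ℝ)) (h : A ≠ ⊤) :
    interior (A : Set (Fin d → ℝ)) = ∅ := by
  by_contra hne
  have hne' : (interior (A : Set (Fin d → ℝ))).Nonempty := Set.nonempty_iff_ne_empty.2 hne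
  have := (A.convex.interior_nonempty_iff_affineSpan_eq_top).1 hne'
  rw [AffineSubspace.affineSpan_coe] at this
  exact h this

open Module in
/-- under genericity, a full-dimensional cell is a simplex -/
lemma cell_card (S : Finset (Fin d → ℝ)) (w : (Fin d → ℝ) → ℝ)
    (Gen : ∀ (α : Fin d → ℝ) (c : ℝ) (T : Finset (Fin d → ℝ)), T ⊆ S →
      (∀ a ∈ T, lVal w α a = c) → T.card ≤ d + 1)
    (α : Fin d → ℝ)
    (hint : (interior (convexHull ℝ (↑(cell S w α) : Set (Fin d → ℝ)))).Nonempty) :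
    (cell S w α).card = d + 1 ∧
      AffineIndependent ℝ (Subtype.val : ↥(↑(cell S w α) : Set (Fin d → ℝ)) → (Fin d → ℝ)) := by
  classical
  set C := cell S w α with hC
  have hspan : affineSpan ℝ (↑C : Set (Fin d → ℝ)) = ⊤ := by
    have := ((convex_convexHull ℝ (↑C : Set (Fin d → ℝ))).interior_nonempty_iff_affineSpan_eq_top).1 hint
    rwa [affineSpan_convexHull] at this
  have hne : C.Nonempty := by
    rcases C.eq_empty_or_nonempty with h | h
    · exfalso
      rw [h] at hspan
      simp only [Finset.coe_empty, AffineSubspace.span_empty] at hspan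
      exact absurd hspan bot_ne_top
    · exact h
  obtain ⟨a₀, ha₀⟩ := hne
  have hval : ∀ a ∈ C, lVal w α a = lVal w α a₀ := fun a ha =>
    le_antisymm ((mem_cell.1 ha).2 a₀ (cell_subset ha₀)) ((mem_cell.1 ha₀).2 a (cell_subset ha))
  have hcardle : C.card ≤ d + 1 := Gen α (lVal w α a₀) C cell_subset hval
  have hvs : vectorSpan ℝ (↑C : Set (Fin d → ℝ)) = ⊤ := by
    rw [← direction_affineSpan, hspan, AffineSubspace.direction_top]
  have hfr : finrank ℝ (vectorSpan ℝ (↑C : Set (Fin d → ℝ))) = d := by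
    rw [hvs]
    rw [finrank_top]
    simp [Module.finrank_fin_fun]
  obtain ⟨m, hm⟩ : ∃ m, C.card = m + 1 :=
    ⟨C.card - 1, (Nat.succ_pred_eq_of_pos (Finset.card_pos.2 ⟨a₀, ha₀⟩)).symm⟩
  have hdlem : d ≤ m := by
    have h := finrank_vectorSpan_image_finset_le ℝ (id : (Fin d → ℝ) → (Fin d → ℝ)) C hm
    have himg : (Finset.image id C) = C := Finset.image_id
    rw [himg, hfr] at h
    exact h
  have hcard : C.card = d + 1 := by omega
  refine ⟨hcard, ?_⟩
  -- affine independence via cardinality and finrank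
  have hfin : Fintype.card ↥C = d + 1 := by rw [Fintype.card_coe]; exact hcard
  have hAI : AffineIndependent ℝ ((↑) : ↥C → (Fin d → ℝ)) := by
    rw [affineIndependent_iff_le_finrank_vectorSpan ℝ _ hfin]
    have : Set.range ((↑) : ↥C → (Fin d → ℝ)) = (↑C : Set (Fin d → ℝ)) := by
      ext z; simp
    rw [this, hfr]
  refine (affineIndependent_equiv
    (Equiv.subtypeEquivRight (fun x => (Finset.mem_coe).symm) : ↥C ≃ ↥(↑C : Set (Fin d → ℝ)))).1 ?_
  have heq : (Subtype.val : ↥(↑C : Set (Fin d → ℝ)) → (Fin d → ℝ)) ∘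
      (Equiv.subtypeEquivRight (fun x => (Finset.mem_coe).symm) : ↥C ≃ ↥(↑C : Set (Fin d → ℝ)))
      = ((↑) : ↥C → (Fin d → ℝ)) := by
    funext z
    simp [Equiv.subtypeEquivRight]; rfl
  rw [heq]
  exact hAI

lemma sum_mul_add' (b α₁ α₂ : Fin d → ℝ) :
    ∑ i, b i * (α₁ + α₂) i = (∑ i, b i * α₁ i) + ∑ i, b i * α₂ i := by
  rw [← Finset.sum_add_distrib]
  exact Finset.sum_congr rfl fun i _ => by rw [Pi.add_apply]; ring

lemma sum_mul_smul' (b : Fin d → ℝ) (r : ℝ) (α : Fin d → ℝ) :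
    ∑ i, b i * (r • α) i = r * ∑ i, b i * α i := by
  rw [Finset.mul_sum]
  exact Finset.sum_congr rfl fun i _ => by rw [Pi.smul_apply, smul_eq_mul]; ring


open scoped Classical in
/-- extend a lifting on `S` to the whole space by zero -/
noncomputable def extendW (S : Finset (Fin d → ℝ)) (ω : ↥S → ℝ) : (Fin d → ℝ) → ℝ :=
  fun a => if h : a ∈ S then ω ⟨a, h⟩ else 0

lemma extendW_mem (S : Finset (Fin d → ℝ)) (ω : ↥S → ℝ) {a : Fin d → ℝ} (ha : a ∈ S) :
    extendW S ω a = ω ⟨a, ha⟩ := dif_pos ha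

/-- liftings whose restriction to `T` lies on a nonvertical hyperplane -/
def badMod (S T : Finset (Fin d → ℝ)) : Submodule ℝ (↥S → ℝ) where
  carrier := {ω | ∃ α : Fin d → ℝ, ∃ c : ℝ, ∀ b : ↥S, (b : Fin d → ℝ) ∈ T →
    ω b = c - ∑ i, (b : Fin d → ℝ) i * α i}
  add_mem' := by
    rintro ω₁ ω₂ ⟨α₁, c₁, h₁⟩ ⟨α₂, c₂, h₂⟩
    refine ⟨α₁ + α₂, c₁ + c₂, fun b hb => ?_⟩
    rw [Pi.add_apply, h₁ b hb, h₂ b hb, sum_mul_add']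
    ring
  zero_mem' := ⟨0, 0, fun b _ => by simp⟩
  smul_mem' := by
    rintro r ω ⟨α, c, h⟩
    refine ⟨r • α, r * c, fun b hb => ?_⟩
    rw [Pi.smul_apply, h b hb, smul_eq_mul, sum_mul_smul']
    ring

open Module in
lemma badMod_ne_top (S T : Finset (Fin d → ℝ)) (hTS : T ⊆ S) (hcard : T.card = d + 2) :
    badMod S T ≠ ⊤ := by
  classical
  intro htop
  -- the evaluation map
  set Φ : ((Fin d → ℝ) × ℝ) →ₗ[ℝ] (↥T → ℝ) :=
    { toFun := fun p => fun b => p.2 - ∑ i, (b : Fin d → ℝ) i * p.1 i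
      map_add' := by
        intro p q
        funext b
        simp only [Prod.fst_add, Prod.snd_add, Pi.add_apply]
        rw [Finset.sum_congr rfl fun i _ => mul_add ((b : Fin d → ℝ) i) (p.1 i) (q.1 i),
          Finset.sum_add_distrib]
        ring
      map_smul' := by
        intro r p
        funext b
        simp only [Prod.smul_fst, Prod.smul_snd, Pi.smul_apply, smul_eq_mul, RingHom.id_apply]
        have hmul : ∑ x, (b : Fin d → ℝ) x * (r * p.1 x) = r * ∑ x, (b : Fin d → ℝ) x * p.1 x := by
          rw [Finset.mul_sum]
          exact Finset.sum_congr rfl fun i _ => by ring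
        rw [hmul]
        ring } with hΦ
  have hsurj : Function.Surjective Φ := by
    intro v
    set ω : ↥S → ℝ := fun b => if h : (b : Fin d → ℝ) ∈ T then v ⟨b, h⟩ else 0 with hω
    have hmem : ω ∈ badMod S T := htop ▸ Submodule.mem_top
    obtain ⟨α, c, h⟩ := hmem
    refine ⟨(α, c), ?_⟩
    funext b
    have hb' : ((⟨(b : Fin d → ℝ), hTS b.2⟩ : ↥S) : Fin d → ℝ) ∈ T := b.2
    have := h ⟨(b : Fin d → ℝ), hTS b.2⟩ hb'
    rw [hω] at this
    simp only [dif_pos b.2] at this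
    have hveq : v ⟨(b : Fin d → ℝ), b.2⟩ = v b := by congr
    rw [hveq] at this
    show c - ∑ i, (b : Fin d → ℝ) i * α i = v b
    rw [← this]
  have hrange : LinearMap.range Φ = ⊤ := LinearMap.range_eq_top.2 hsurj
  have h1 : finrank ℝ (↥T → ℝ) ≤ finrank ℝ ((Fin d → ℝ) × ℝ) := by
    calc finrank ℝ (↥T → ℝ) = finrank ℝ (LinearMap.range Φ) := by rw [hrange]; exact (finrank_top _ _).symm
    _ ≤ _ := LinearMap.finrank_range_le Φ
  rw [Module.finrank_prod, Module.finrank_pi, Module.finrank_pi, Module.finrank_self,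
    Fintype.card_coe, hcard, Fintype.card_fin] at h1
  omega

/-- almost every lifting is generic -/
lemma gen_ae (S : Finset (Fin d → ℝ)) :
    ∀ᵐ ω ∂(volume : Measure (↥S → ℝ)),
      ∀ (α : Fin d → ℝ) (c : ℝ) (T : Finset (Fin d → ℝ)), T ⊆ S →
        (∀ a ∈ T, lVal (extendW S ω) α a = c) → T.card ≤ d + 1 := by
  classical
  rw [ae_iff]
  have hnull : volume (⋃ T ∈ ((S.powersetCard (d + 2)) : Set (Finset (Fin d → ℝ))),
      (badMod S T : Set (↥S → ℝ))) = 0 := by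
    rw [measure_biUnion_null_iff (S.powersetCard (d+2)).finite_toSet.countable]
    intro T hT
    obtain ⟨hTS, hTcard⟩ := Finset.mem_powersetCard.1 (Finset.mem_coe.1 hT)
    exact Measure.addHaar_submodule _ _ (badMod_ne_top S T hTS hTcard)
  refine measure_mono_null (fun ω hω => ?_) hnull
  simp only [Set.mem_setOf_eq] at hω
  push_neg at hω
  obtain ⟨α, c, T, hTS, hval, hcard⟩ := hω
  obtain ⟨T', hT'T, hT'card⟩ := Finset.exists_subset_card_eq (show d + 2 ≤ T.card by omega)
  refine Set.mem_biUnion (Finset.mem_coe.2 (Finset.mem_powersetCard.2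
    ⟨hT'T.trans hTS, hT'card⟩)) ?_
  refine ⟨α, c, fun b hb => ?_⟩
  have hbS : (b : Fin d → ℝ) ∈ S := b.2
  have hv := hval (b : Fin d → ℝ) (hT'T hb)
  rw [lVal, extendW_mem S ω hbS] at hv
  have hωb : ω ⟨(b : Fin d → ℝ), hbS⟩ = ω b := by congr
  rw [hωb] at hv
  linarith

theorem stmt19 {d : ℕ} (S : Finset (Fin d → ℝ))
    (hS : (interior (convexHull ℝ (S : Set (Fin d → ℝ)))).Nonempty) :
    ∀ᵐ ω ∂(volume : Measure (↥S → ℝ)),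
      -- `F ω α` is the set of points of `S` whose lifts attain the minimum of the
      -- linear functional `⟨·, (α,1)⟩` on the lifted set `Ŝ`
      let F : (Fin d → ℝ) → Set (Fin d → ℝ) := fun α =>
        {a | ∃ ha : a ∈ S, ∀ b, ∀ hb : b ∈ S,
          (∑ i, a i * α i) + ω ⟨a, ha⟩ ≤ (∑ i, b i * α i) + ω ⟨b, hb⟩}
      let 𝒟 : Set (Set (Fin d → ℝ)) :=
        {C | ∃ α : Fin d → ℝ, C = F α ∧ (interior (convexHull ℝ (F α))).Nonempty}
      (∀ C ∈ 𝒟, C.Finite ∧ C.ncard = d + 1 ∧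
        AffineIndependent ℝ (Subtype.val : ↥C → (Fin d → ℝ))) ∧
      (∀ C₁ ∈ 𝒟, ∀ C₂ ∈ 𝒟, C₁ ≠ C₂ →
        (convexHull ℝ C₁ ∩ convexHull ℝ C₂).Nonempty →
        convexHull ℝ C₁ ∩ convexHull ℝ C₂ = convexHull ℝ (C₁ ∩ C₂)) ∧
      (⋃ C ∈ 𝒟, convexHull ℝ C) = convexHull ℝ (S : Set (Fin d → ℝ)) := by
  classical
  filter_upwards [gen_ae S] with ω hgen
  intro F 𝒟
  set w : (Fin d → ℝ) → ℝ := extendW S ω with hw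
  have hFcell : ∀ α, F α = (↑(cell S w α) : Set (Fin d → ℝ)) := by
    intro α
    ext a
    constructor
    · rintro ⟨ha, h⟩
      rw [Finset.mem_coe, mem_cell]
      refine ⟨ha, fun b hb => ?_⟩
      have h' := h b hb
      rw [lVal, lVal, hw, extendW_mem S ω ha, extendW_mem S ω hb]
      exact h'
    · intro hmem
      rw [Finset.mem_coe, mem_cell] at hmem
      obtain ⟨ha, h⟩ := hmem
      refine ⟨ha, fun b hb => ?_⟩
      have h' := h b hb
      rw [lVal, lVal, hw, extendW_mem S ω ha, extendW_mem S ω hb] at h'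
      exact h'
  have hD : ∀ C ∈ 𝒟, ∃ α, C = (↑(cell S w α) : Set (Fin d → ℝ)) ∧
      (interior (convexHull ℝ (↑(cell S w α) : Set (Fin d → ℝ)))).Nonempty := by
    intro C hC
    obtain ⟨α, hCeq, hint⟩ := hC
    exact ⟨α, by rw [hCeq, hFcell], by rwa [hFcell α] at hint⟩
  refine ⟨?_, ?_, ?_⟩
  · -- cells are simplices
    intro C hC
    obtain ⟨α, hCeq, hint⟩ := hD C hC
    have h := cell_card S w hgen α hint
    subst hCeq
    refine ⟨Finset.finite_toSet _, ?_, h.2⟩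
    rw [Set.ncard_coe_finset]
    exact h.1
  · -- intersections
    intro C₁ h₁ C₂ h₂ hne hinter
    obtain ⟨α₁, e₁, _⟩ := hD C₁ h₁
    obtain ⟨α₂, e₂, _⟩ := hD C₂ h₂
    subst e₁; subst e₂
    refine Set.Subset.antisymm ?_ ?_
    · intro x hx
      have h := cells_inter S w α₁ α₂ hx
      rwa [Finset.coe_inter] at h
    · exact Set.subset_inter (convexHull_mono Set.inter_subset_left)
        (convexHull_mono Set.inter_subset_right)
  · -- the union covers the hull
    refine Set.Subset.antisymm ?_ ?_
    · refine Set.iUnion₂_subset fun C hC => ?_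
      obtain ⟨α, e, _⟩ := hD C hC
      rw [e]
      exact convexHull_mono (Finset.coe_subset.2 cell_subset)
    · set U := ⋃ C ∈ 𝒟, convexHull ℝ C with hU
      have hDfin : 𝒟.Finite := by
        have hfin0 : ((fun t : Finset (Fin d → ℝ) => (↑t : Set (Fin d → ℝ))) ''
            ↑S.powerset).Finite := (S.powerset.finite_toSet).image _
        refine Set.Finite.subset hfin0 ?_
        intro C hC
        obtain ⟨α, e, _⟩ := hD C hC
        exact ⟨cell S w α, Finset.mem_coe.2 (Finset.mem_powerset.2 cell_subset), e.symm⟩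
      have hUclosed : IsClosed U := by
        refine Set.Finite.isClosed_biUnion hDfin fun C hC => ?_
        obtain ⟨α, e, _⟩ := hD C hC
        rw [e]
        exact (Finset.finite_toSet _).isClosed_convexHull ℝ
      set badF : Finset (Finset (Fin d → ℝ)) :=
        S.powerset.filter (fun t => affineSpan ℝ (↑t : Set (Fin d → ℝ)) ≠ ⊤) with hbadF
      set N : Set (Fin d → ℝ) :=
        ⋃ t ∈ badF, ((affineSpan ℝ (↑t : Set (Fin d → ℝ)) : AffineSubspace ℝ (Fin d → ℝ))
          : Set (Fin d → ℝ)) with hN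
      have hNprop := biUnion_closed_empty_interior badF
        (fun t => ((affineSpan ℝ (↑t : Set (Fin d → ℝ)) : AffineSubspace ℝ (Fin d → ℝ))
          : Set (Fin d → ℝ)))
        (fun t _ => AffineSubspace.closed_of_finiteDimensional _)
        (fun t ht => proper_affine_interior_empty _ (Finset.mem_filter.1 ht).2)
      set O := interior (convexHull ℝ (↑S : Set (Fin d → ℝ))) with hO
      have hsub : O \ N ⊆ U := by
        rintro x ⟨hxO, hxN⟩
        obtain ⟨α, hxcell⟩ := cover S w x hxO
        have hspan : affineSpan ℝ (↑(cell S w α) : Set (Fin d → ℝ)) = ⊤ := by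
          by_contra hsp
          apply hxN
          refine Set.mem_biUnion ?_ (convexHull_subset_affineSpan _ hxcell)
          exact Finset.mem_coe.2 (Finset.mem_filter.2
            ⟨Finset.mem_powerset.2 cell_subset, hsp⟩)
        have hintcell : (interior (convexHull ℝ (↑(cell S w α)
            : Set (Fin d → ℝ)))).Nonempty := by
          rw [(convex_convexHull ℝ _).interior_nonempty_iff_affineSpan_eq_top,
            affineSpan_convexHull]
          exact hspan
        have hmem𝒟 : (↑(cell S w α) : Set (Fin d → ℝ)) ∈ 𝒟 :=
          ⟨α, (hFcell α).symm, by rw [hFcell α]; exact hintcell⟩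
        exact Set.mem_biUnion hmem𝒟 hxcell
      have hOsub : O ⊆ closure (O \ N) := by
        intro x hxO
        rw [mem_closure_iff]
        intro V hV hxV
        by_contra hemp
        rw [Set.not_nonempty_iff_eq_empty] at hemp
        have hVO : V ∩ O ⊆ N := by
          intro v hv
          by_contra hvN
          have : v ∈ V ∩ (O \ N) := ⟨hv.1, hv.2, hvN⟩
          rw [hemp] at this
          exact this
        have hVI : V ∩ O ⊆ interior N :=
          interior_maximal hVO (hV.inter isOpen_interior)
        rw [hNprop.2] at hVI
        exact hVI ⟨hxV, hxO⟩
      calc convexHull ℝ (↑S : Set (Fin d → ℝ))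
          ⊆ closure O := convex_subset_closure_interior (convex_convexHull ℝ _) hS
        _ ⊆ closure (O \ N) := closure_minimal hOsub isClosed_closure
        _ ⊆ U := closure_minimal hsub hUclosed
end
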